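/- Let R be a commutative ring and let u, v, w, r be positive natural numbers. If u×v by v×w matrix multiplication over R admits a bilinear algorithm with r multiplications, then w×u by u×v matrix multiplication over R also admits a bilinear algorithm with r multiplications (cyclic symmetry of the matrix multiplication tensor: ⟨u,v,w⟩ = ⟨w,u,v⟩). -/
import Mathlib


/-- A bilinear (non-commutative) algorithm computing `u×v` by `v×w` matrix
multiplication over `R` with `r` multiplications: there are `R`-linear
functionals `f i` on `u×v` matrices, `R`-linear functionals `g i` on `v×w`
matrices, and `u×w` matrices `C i` such that `A * B = ∑ i, f i A * g i B • C i`
for all `A`, `B`. -/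
def BilinearAlgorithm (R : Type*) [CommRing R] (u v w r : ℕ) : Prop :=
  ∃ (f : Fin r → (Matrix (Fin u) (Fin v) R →ₗ[R] R))
    (g : Fin r → (Matrix (Fin v) (Fin w) R →ₗ[R] R))
    (C : Fin r → Matrix (Fin u) (Fin w) R),
    ∀ (A : Matrix (Fin u) (Fin v) R) (B : Matrix (Fin v) (Fin w) R),
      A * B = ∑ i, (f i A * g i B) • C i

private def entryLM (R : Type*) [CommRing R] {m n : Type*} (i : m) (j : n) :
    Matrix m n R →ₗ[R] R where
  toFun M := M i j
  map_add' _ _ := rfl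
  map_smul' _ _ := rfl

private lemma entryLM_apply (R : Type*) [CommRing R] {m n : Type*} (i : m) (j : n)
    (M : Matrix m n R) : entryLM R i j M = M i j := rfl

/-- Cyclic symmetry of the matrix multiplication tensor: ⟨u,v,w⟩ = ⟨w,u,v⟩. -/
theorem bilinearAlgorithm_cyclic (R : Type*) [CommRing R] (u v w r : ℕ)
    (hu : 0 < u) (hv : 0 < v) (hw : 0 < w) (hr : 0 < r)
    (h : BilinearAlgorithm R u v w r) : BilinearAlgorithm R w u v r := by
  obtain ⟨f, g, C, h⟩ := h
  refine ⟨fun i => ∑ k, ∑ l, C i k l • entryLM R l k,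
          f,
          fun i => Matrix.of fun m j => g i (Matrix.single j m 1), ?_⟩
  intro D A
  ext m j
  have key : ∀ k l, (A * Matrix.single j m (1:R)) k l
      = ∑ i, (f i A * g i (Matrix.single j m 1)) * C i k l := by
    intro k l
    have := congrArg (fun M => M k l) (h A (Matrix.single j m 1))
    simpa [Matrix.sum_apply] using this
  have e1 : ∀ k l, (A * Matrix.single j m (1:R)) k l
      = if m = l then A k j else 0 := by
    intro k l
    simp [Matrix.mul_apply, Matrix.single, Matrix.of_apply, Finset.sum_ite_eq,
      and_comm, ite_and]
  simp only [Matrix.mul_apply, Matrix.sum_apply, Matrix.smul_apply, Matrix.of_apply,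
    LinearMap.sum_apply, LinearMap.smul_apply, smul_eq_mul, entryLM_apply]
  have main : ∑ x : Fin r, (∑ k, ∑ l, C x k l * D l k) * f x A
        * g x (Matrix.single j m 1)
      = ∑ k, ∑ l, D l k * (A * Matrix.single j m (1:R)) k l := by
    simp only [key, Finset.mul_sum, Finset.sum_mul]
    rw [Finset.sum_comm]
    refine Finset.sum_congr rfl fun k _ => ?_
    rw [Finset.sum_comm]
    refine Finset.sum_congr rfl fun l _ => Finset.sum_congr rfl fun x _ => by ring
  rw [main]
  simp only [e1]
  simp [Finset.sum_ite_eq, mul_comm]
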